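/- Let d ∈ ℕ and K ∈ L²(ℝ^d × ℝ^d; ℂ). Then the integral operator T_K is a well-defined bounded linear operator on L²(ℝ^d; ℂ), and for every Hilbert basis (e_i)_{i∈I} of L²(ℝ^d; ℂ), the family (‖T_K e_i‖²)_{i∈I} is summable with Σ_{i∈I} ‖T_K e_i‖² = ∫_{ℝ^d} ∫_{ℝ^d} |K(x,y)|² dx dy. (This is the characterization used by the paper: an operator given by an L² kernel is Hilbert–Schmidt, with Hilbert–Schmidt norm equal to the L² norm of its kernel.) -/

import Mathlib

open MeasureTheory ENNReal

lemma countable_of_orthonormal' {E : Type*} [NormedAddCommGroup E] [InnerProductSpace ℂ E]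
    [TopologicalSpace.SeparableSpace E] {ι : Type*} {e : ι → E} (he : Orthonormal ℂ e) :
    Countable ι := by
  obtain ⟨D, hDc, hDd⟩ := TopologicalSpace.exists_countable_dense E
  have key : ∀ i, ∃ z ∈ D, dist (e i) z < 1/2 := fun i => hDd.exists_dist_lt (e i) (by norm_num)
  choose z hzD hz using key
  have hinj : Function.Injective z := by
    intro i j hij
    by_contra hne
    have hd : dist (e i) (e j) < 1 := by
      calc dist (e i) (e j) ≤ dist (e i) (z i) + dist (z j) (e j) := by
            rw [hij]; exact dist_triangle _ _ _
        _ < 1/2 + 1/2 := by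
            have := hz j
            rw [dist_comm] at this
            exact add_lt_add (hz i) this
        _ = 1 := by norm_num
    have h2 : ‖e i - e j‖ ^ 2 = 2 := by
      rw [@norm_sub_sq ℂ, he.2 hne, he.1 i, he.1 j]
      norm_num
    rw [← dist_eq_norm] at h2
    nlinarith [dist_nonneg (x := e i) (y := e j)]
  have : Countable D := hDc.to_subtype
  exact Function.Injective.countable (f := fun i => (⟨z i, hzD i⟩ : D))
    (fun i j h => hinj (congrArg Subtype.val h))

lemma eLpNorm_two_sq' {α : Type*} [MeasurableSpace α] {μ : Measure α} {f : α → ℂ} :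
    eLpNorm f 2 μ ^ 2 = ∫⁻ x, (‖f x‖₊ : ℝ≥0∞) ^ 2 ∂μ := by
  rw [eLpNorm_eq_lintegral_rpow_enorm_toReal (by norm_num) (by norm_num)]
  have h2 : ((2:ℝ≥0∞)).toReal = (2:ℝ) := by norm_num
  rw [h2, ← ENNReal.rpow_natCast _ 2, ← ENNReal.rpow_mul]
  norm_num
  rfl

lemma memℒp_two_of_lintegral' {α : Type*} [MeasurableSpace α] {μ : Measure α} {f : α → ℂ}
    (hf : AEStronglyMeasurable f μ) (h : ∫⁻ x, (‖f x‖₊ : ℝ≥0∞) ^ 2 ∂μ ≠ ∞) :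
    MemLp f 2 μ := by
  refine ⟨hf, ?_⟩
  rw [lt_top_iff_ne_top]
  intro hc
  apply h
  rw [← eLpNorm_two_sq' (f := f) (μ := μ), hc]
  simp

lemma ennreal_le_of_sq_le_sq' {a b : ℝ≥0∞} (h : a ^ 2 ≤ b ^ 2) : a ≤ b := by
  calc a = (a ^ 2) ^ (1/2 : ℝ) := by
        rw [← ENNReal.rpow_natCast a 2, ← ENNReal.rpow_mul]; norm_num
    _ ≤ (b ^ 2) ^ (1/2 : ℝ) := ENNReal.rpow_le_rpow h (by norm_num)
    _ = b := by rw [← ENNReal.rpow_natCast b 2, ← ENNReal.rpow_mul]; norm_num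

lemma parseval_sq' {E : Type*} [NormedAddCommGroup E] [InnerProductSpace ℂ E] [CompleteSpace E]
    {ι : Type*} (e : HilbertBasis ι ℂ E) (v : E) :
    Summable (fun i => ‖(inner ℂ (e i) v : ℂ)‖ ^ 2) ∧
    ∑' i, ‖(inner ℂ (e i) v : ℂ)‖ ^ 2 = ‖v‖ ^ 2 := by
  have hrepr : ∀ i, (e.repr v) i = (inner ℂ (e i) v : ℂ) := fun i => by
    simpa using e.repr_apply_apply v i
  have hmem := lp.memℓp (e.repr v)
  have h2 : (0:ℝ) < (2:ℝ≥0∞).toReal := by norm_num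
  have hs := (memℓp_gen_iff h2).1 hmem
  have hn := lp.norm_rpow_eq_tsum h2 (e.repr v)
  have htr : ((2:ℝ≥0∞)).toReal = (2:ℝ) := by norm_num
  rw [htr] at hs hn
  have hpow : ∀ r : ℝ, r ^ (2:ℝ) = r ^ (2:ℕ) := fun r => by
    rw [← Real.rpow_natCast r 2]; norm_num
  simp only [hpow, hrepr] at hs hn
  rw [e.repr.norm_map v] at hn
  exact ⟨hs, hn.symm⟩

lemma parseval_sq_ennreal' {E : Type*} [NormedAddCommGroup E] [InnerProductSpace ℂ E]
    [CompleteSpace E] {ι : Type*} (e : HilbertBasis ι ℂ E) (v : E) :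
    ∑' i, ((‖(inner ℂ (e i) v : ℂ)‖₊ : ℝ≥0∞)) ^ 2 = ((‖v‖₊ : ℝ≥0∞)) ^ 2 := by
  obtain ⟨hs, hn⟩ := parseval_sq' e v
  have hsnn : Summable (fun i => (‖(inner ℂ (e i) v : ℂ)‖₊ : NNReal) ^ 2) := by
    rw [← NNReal.summable_coe]
    simpa using hs
  calc ∑' i, ((‖(inner ℂ (e i) v : ℂ)‖₊ : ℝ≥0∞)) ^ 2
      = ∑' i, (((‖(inner ℂ (e i) v : ℂ)‖₊ ^ 2 : NNReal)) : ℝ≥0∞) := by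
        simp [ENNReal.coe_pow]
    _ = ENNReal.ofNNReal (∑' i, (‖(inner ℂ (e i) v : ℂ)‖₊ ^ 2 : NNReal)) :=
        (ENNReal.coe_tsum hsnn).symm
    _ = ((‖v‖₊ : ℝ≥0∞)) ^ 2 := by
        rw [← ENNReal.coe_pow]
        congr 1
        apply NNReal.coe_injective
        rw [NNReal.coe_tsum]
        simpa using hn

/-- An `L²` kernel `K` on `ℝ^d × ℝ^d` induces a bounded integral operator `T_K` on
`L²(ℝ^d; ℂ)`, which is Hilbert–Schmidt with Hilbert–Schmidt norm equal to the `L²` norm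
of the kernel: for every Hilbert basis `(e_i)`, `Σ_i ‖T_K e_i‖² = ∫∫ |K(x,y)|² dx dy`. -/
theorem l2_kernel_hilbert_schmidt
    (d : ℕ) (K : Lp ℂ 2 (volume : Measure ((Fin d → ℝ) × (Fin d → ℝ)))) :
    ∃ T : Lp ℂ 2 (volume : Measure (Fin d → ℝ)) →L[ℂ] Lp ℂ 2 (volume : Measure (Fin d → ℝ)),
      (∀ f : Lp ℂ 2 (volume : Measure (Fin d → ℝ)),
        (T f : (Fin d → ℝ) → ℂ) =ᵐ[volume] fun x => ∫ y : Fin d → ℝ, K (x, y) * f y) ∧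
      ∀ (ι : Type*) (e : HilbertBasis ι ℂ (Lp ℂ 2 (volume : Measure (Fin d → ℝ)))),
        Summable (fun i : ι => ‖T (e i)‖ ^ 2) ∧
        ∑' i : ι, ‖T (e i)‖ ^ 2 = ∫ x : Fin d → ℝ, ∫ y : Fin d → ℝ, ‖K (x, y)‖ ^ 2 := by
  classical
  haveI hFact : Fact ((2:ℝ≥0∞) ≠ ∞) := ⟨by norm_num⟩
  set μ : Measure (Fin d → ℝ) := volume with hμ
  have hK : MemLp (K : (Fin d → ℝ) × (Fin d → ℝ) → ℂ) 2 volume := Lp.memLp K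
  set Kf : (Fin d → ℝ) × (Fin d → ℝ) → ℂ := (K : (Fin d → ℝ) × (Fin d → ℝ) → ℂ) with hKfdef
  obtain ⟨g, hgm, hgK⟩ : ∃ g, StronglyMeasurable g ∧ Kf =ᵐ[volume] g :=
    ⟨hK.1.mk _, hK.1.stronglyMeasurable_mk, hK.1.ae_eq_mk⟩
  have hprod : (volume : Measure ((Fin d → ℝ) × (Fin d → ℝ))) = μ.prod μ :=
    Measure.volume_eq_prod _ _
  set M : ℝ≥0∞ := ∫⁻ z, (‖g z‖₊ : ℝ≥0∞) ^ 2 ∂(μ.prod μ) with hMdef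
  have hgmeas : Measurable (fun z => (‖g z‖₊ : ℝ≥0∞) ^ 2) :=
    (hgm.measurable.nnnorm.coe_nnreal_ennreal).pow_const 2
  have hMne : M ≠ ∞ := by
    have h1 : eLpNorm g 2 (μ.prod μ) = eLpNorm Kf 2 volume := by
      rw [hprod] at hgK; rw [eLpNorm_congr_ae hgK.symm, hprod]
    have h2 : eLpNorm g 2 (μ.prod μ) ≠ ∞ := by rw [h1]; exact hK.2.ne
    rw [hMdef, ← eLpNorm_two_sq']
    exact ENNReal.pow_ne_top h2
  have hfub : ∫⁻ x, (∫⁻ y, (‖g (x, y)‖₊ : ℝ≥0∞) ^ 2 ∂μ) ∂μ = M := by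
    rw [hMdef, lintegral_prod _ hgmeas.aemeasurable]
  have hlm : Measurable (fun x => ∫⁻ y, (‖g (x, y)‖₊ : ℝ≥0∞) ^ 2 ∂μ) := by
    apply Measurable.lintegral_prod_right (f := fun x y => (‖g (x, y)‖₊ : ℝ≥0∞) ^ 2)
    exact hgmeas
  have hfin : ∀ᵐ x ∂μ, ∫⁻ y, (‖g (x, y)‖₊ : ℝ≥0∞) ^ 2 ∂μ < ∞ :=
    ae_lt_top hlm (by rw [hfub]; exact hMne)
  set P : (Fin d → ℝ) → Prop := fun x => MemLp (fun y => (starRingEnd ℂ) (g (x, y))) 2 μ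
    with hPdef
  have hconj_nn : ∀ z : ℂ, ‖(starRingEnd ℂ) z‖₊ = ‖z‖₊ := fun z => RCLike.nnnorm_conj z
  have hP : ∀ᵐ x ∂μ, P x := by
    filter_upwards [hfin] with x hx
    apply memℒp_two_of_lintegral'
    · exact (continuous_star.comp_stronglyMeasurable
        (hgm.comp_measurable (measurable_prodMk_left))).aestronglyMeasurable
    · simp only [hconj_nn]
      exact hx.ne
  set c : (Fin d → ℝ) → Lp ℂ 2 μ := fun x => if h : P x then MemLp.toLp _ h else 0 with hcdef
  have hcP : ∀ (x) (h : P x), c x = MemLp.toLp (fun y => (starRingEnd ℂ) (g (x, y))) h :=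
    fun x h => dif_pos h
  have hcnorm : ∀ᵐ x ∂μ, ((‖c x‖₊ : ℝ≥0∞)) ^ 2 = ∫⁻ y, (‖g (x, y)‖₊ : ℝ≥0∞) ^ 2 ∂μ := by
    filter_upwards [hP] with x hx
    rw [hcP x hx, Lp.nnnorm_toLp, ENNReal.coe_toNNReal, eLpNorm_two_sq']
    · simp only [hconj_nn]
    · rw [← lt_top_iff_ne_top]; exact hx.2
  have hcM : ∫⁻ x, ((‖c x‖₊ : ℝ≥0∞)) ^ 2 ∂μ = M := by
    rw [lintegral_congr_ae hcnorm, hfub]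
  -- inner product formula
  have hinner : ∀ f : Lp ℂ 2 μ,
      (fun x => (inner ℂ (c x) f : ℂ)) =ᵐ[μ] fun x => ∫ y, g (x, y) * f y ∂μ := by
    intro f
    filter_upwards [hP] with x hx
    rw [hcP x hx, L2.inner_def]
    apply integral_congr_ae
    filter_upwards [MemLp.coeFn_toLp hx] with y hy
    rw [hy, RCLike.inner_apply]
    simp
    ring
  have hmeasF : ∀ f : Lp ℂ 2 μ,
      AEStronglyMeasurable (fun x => ∫ y, g (x, y) * f y ∂μ) μ := by
    intro f
    have h1 : AEStronglyMeasurable (fun z : (Fin d → ℝ) × (Fin d → ℝ) => g z * f z.2)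
        (μ.prod μ) :=
      hgm.aestronglyMeasurable.mul ((Lp.aestronglyMeasurable f).comp_snd)
    exact h1.integral_prod_right'
  have hFaesm : ∀ f : Lp ℂ 2 μ, AEStronglyMeasurable (fun x => (inner ℂ (c x) f : ℂ)) μ :=
    fun f => (hmeasF f).congr (hinner f).symm
  have hFlint : ∀ f : Lp ℂ 2 μ,
      ∫⁻ x, (‖(inner ℂ (c x) f : ℂ)‖₊ : ℝ≥0∞) ^ 2 ∂μ ≤ M * (‖f‖₊ : ℝ≥0∞) ^ 2 := by
    intro f
    calc ∫⁻ x, (‖(inner ℂ (c x) f : ℂ)‖₊ : ℝ≥0∞) ^ 2 ∂μ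
        ≤ ∫⁻ x, ((‖c x‖₊ : ℝ≥0∞)) ^ 2 * (‖f‖₊ : ℝ≥0∞) ^ 2 ∂μ := by
          apply lintegral_mono
          intro x
          have := nnnorm_inner_le_nnnorm (𝕜 := ℂ) (c x) f
          calc (‖(inner ℂ (c x) f : ℂ)‖₊ : ℝ≥0∞) ^ 2 ≤ ((‖c x‖₊ * ‖f‖₊ : NNReal) : ℝ≥0∞) ^ 2 := by
                have h' : (‖(inner ℂ (c x) f : ℂ)‖₊ : ℝ≥0∞) ≤ ((‖c x‖₊ * ‖f‖₊ : NNReal) : ℝ≥0∞) :=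
                  ENNReal.coe_le_coe.2 this
                exact pow_le_pow_left₀ (by positivity) h' 2

            _ = ((‖c x‖₊ : ℝ≥0∞)) ^ 2 * (‖f‖₊ : ℝ≥0∞) ^ 2 := by
                push_cast; ring
      _ = M * (‖f‖₊ : ℝ≥0∞) ^ 2 := by
          rw [lintegral_mul_const' _ _ (ENNReal.pow_ne_top ENNReal.coe_ne_top), hcM]
  have hFmem : ∀ f : Lp ℂ 2 μ, MemLp (fun x => (inner ℂ (c x) f : ℂ)) 2 μ := by
    intro f
    apply memℒp_two_of_lintegral' (hFaesm f)
    exact ne_top_of_le_ne_top (ENNReal.mul_ne_top hMne (ENNReal.pow_ne_top ENNReal.coe_ne_top)) (hFlint f)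
  -- the linear map
  set Tlin : Lp ℂ 2 μ →ₗ[ℂ] Lp ℂ 2 μ :=
    { toFun := fun f => MemLp.toLp _ (hFmem f)
      map_add' := by
        intro f h
        apply Lp.ext
        filter_upwards [MemLp.coeFn_toLp (hFmem (f + h)),
          Lp.coeFn_add (MemLp.toLp _ (hFmem f)) (MemLp.toLp _ (hFmem h)),
          MemLp.coeFn_toLp (hFmem f), MemLp.coeFn_toLp (hFmem h)] with x h1 h2 h3 h4
        rw [h1, h2, Pi.add_apply, h3, h4, inner_add_right]
      map_smul' := by
        intro a f
        simp only [RingHom.id_apply]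
        apply Lp.ext
        filter_upwards [MemLp.coeFn_toLp (hFmem (a • f)),
          Lp.coeFn_smul a (MemLp.toLp _ (hFmem f)),
          MemLp.coeFn_toLp (hFmem f)] with x h1 h2 h3
        rw [h1, h2, Pi.smul_apply, h3, inner_smul_right]
        simp } with hTlindef
  have hTnorm : ∀ f : Lp ℂ 2 μ, ‖Tlin f‖ ≤ (M ^ (1/2 : ℝ)).toReal * ‖f‖ := by
    intro f
    have hle : eLpNorm (fun x => (inner ℂ (c x) f : ℂ)) 2 μ ≤ M ^ (1/2 : ℝ) * (‖f‖₊ : ℝ≥0∞) := by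
      apply ennreal_le_of_sq_le_sq'
      rw [eLpNorm_two_sq']
      calc ∫⁻ x, (‖(inner ℂ (c x) f : ℂ)‖₊ : ℝ≥0∞) ^ 2 ∂μ ≤ M * (‖f‖₊ : ℝ≥0∞) ^ 2 := hFlint f
        _ = (M ^ (1/2 : ℝ) * (‖f‖₊ : ℝ≥0∞)) ^ 2 := by
            rw [mul_pow, ← ENNReal.rpow_natCast (M ^ (1/2:ℝ)) 2, ← ENNReal.rpow_mul]
            norm_num
    have hrne : M ^ (1/2 : ℝ) * (‖f‖₊ : ℝ≥0∞) ≠ ∞ :=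
      ENNReal.mul_ne_top (ENNReal.rpow_ne_top_of_nonneg (by norm_num) hMne) ENNReal.coe_ne_top
    calc ‖Tlin f‖ = (eLpNorm (fun x => (inner ℂ (c x) f : ℂ)) 2 μ).toReal :=
          Lp.norm_toLp _ (hFmem f)
      _ ≤ (M ^ (1/2 : ℝ) * (‖f‖₊ : ℝ≥0∞)).toReal := ENNReal.toReal_mono hrne hle
      _ = (M ^ (1/2 : ℝ)).toReal * ‖f‖ := by
          rw [ENNReal.toReal_mul, ENNReal.coe_toReal, coe_nnnorm]
  set T : Lp ℂ 2 μ →L[ℂ] Lp ℂ 2 μ := Tlin.mkContinuous _ hTnorm with hTdef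
  have hTapp : ∀ f : Lp ℂ 2 μ, T f = MemLp.toLp _ (hFmem f) := fun f => rfl
  refine ⟨T, ?_, ?_⟩
  · -- integral formula
    intro f
    have h1 : (T f : (Fin d → ℝ) → ℂ) =ᵐ[μ] fun x => (inner ℂ (c x) f : ℂ) := by
      rw [hTapp f]; exact MemLp.coeFn_toLp _
    have h2 := hinner f
    have h3 : ∀ᵐ x ∂μ, ∫ y, g (x, y) * f y ∂μ = ∫ y, Kf (x, y) * f y ∂μ := by
      have hae : ∀ᵐ x ∂μ, ∀ᵐ y ∂μ, Kf (x, y) = g (x, y) :=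
        Measure.ae_ae_of_ae_prod (p := fun z => Kf z = g z) (by rw [← hprod]; exact hgK)
      filter_upwards [hae] with x hx
      apply integral_congr_ae
      filter_upwards [hx] with y hy
      rw [hy]
    exact h1.trans (h2.trans h3)
  · -- Hilbert–Schmidt identity
    intro ι e
    haveI : Countable ι := countable_of_orthonormal' e.orthonormal
    set A : ι → ℝ≥0∞ := fun i => ∫⁻ x, (‖(inner ℂ (c x) (e i) : ℂ)‖₊ : ℝ≥0∞) ^ 2 ∂μ with hAdef
    have hAne : ∀ i, A i ≠ ∞ := fun i =>
      ne_top_of_le_ne_top (ENNReal.mul_ne_top hMne (ENNReal.pow_ne_top ENNReal.coe_ne_top))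
        (hFlint (e i))
    have hTA : ∀ i, ‖T (e i)‖ ^ 2 = (A i).toReal := by
      intro i
      have h1 : ‖T (e i)‖ = (eLpNorm (fun x => (inner ℂ (c x) (e i) : ℂ)) 2 μ).toReal :=
        Lp.norm_toLp _ (hFmem (e i))
      rw [h1, ← ENNReal.toReal_pow, eLpNorm_two_sq']
    have hsymm : ∀ (x : Fin d → ℝ), (fun i => (‖(inner ℂ (c x) (e i) : ℂ)‖₊ : ℝ≥0∞) ^ 2)
        = fun i => (‖(inner ℂ (e i) (c x) : ℂ)‖₊ : ℝ≥0∞) ^ 2 := by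
      intro x; funext i
      congr 2
      have h := hconj_nn ((inner ℂ (e i) (c x) : ℂ))
      rw [inner_conj_symm] at h
      exact h
    have hmeasA : ∀ i, AEMeasurable (fun x => (‖(inner ℂ (c x) (e i) : ℂ)‖₊ : ℝ≥0∞) ^ 2) μ :=
      fun i => ((hFaesm (e i)).enorm.pow_const 2)
    have hsum : ∑' i, A i = M := by
      rw [hAdef]
      calc ∑' i, ∫⁻ x, (‖(inner ℂ (c x) (e i) : ℂ)‖₊ : ℝ≥0∞) ^ 2 ∂μ
          = ∫⁻ x, ∑' i, (‖(inner ℂ (c x) (e i) : ℂ)‖₊ : ℝ≥0∞) ^ 2 ∂μ :=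
            (lintegral_tsum hmeasA).symm
        _ = ∫⁻ x, ((‖c x‖₊ : ℝ≥0∞)) ^ 2 ∂μ := by
            apply lintegral_congr
            intro x
            rw [hsymm x]
            exact parseval_sq_ennreal' e (c x)
        _ = M := hcM
    -- identification of the double integral
    have hpowconv : (fun z => ‖Kf z‖ ^ ((2:ℝ≥0∞)).toReal) = fun z => ‖Kf z‖ ^ (2:ℕ) := by
      funext z
      rw [ENNReal.toReal_ofNat, ← Real.rpow_natCast]
      norm_num
    have hint : Integrable (fun z => ‖Kf z‖ ^ 2) (μ.prod μ) := by
      have h := hK.integrable_norm_rpow (by norm_num) (by norm_num)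
      rw [hprod] at h
      rwa [hpowconv] at h
    have hM2 : ∫ z, ‖Kf z‖ ^ 2 ∂(μ.prod μ) = M.toReal := by
      rw [integral_eq_lintegral_of_nonneg_ae (Filter.Eventually.of_forall fun z => sq_nonneg _)
        hint.1]
      congr 1
      rw [hMdef]
      apply lintegral_congr_ae
      have hKg : Kf =ᵐ[μ.prod μ] g := by rw [← hprod]; exact hgK
      filter_upwards [hKg] with z hz
      rw [ENNReal.ofReal_pow (norm_nonneg _), ofReal_norm_eq_enorm, hz, enorm_eq_nnnorm]
    have hsplit := integral_prod (μ := μ) (ν := μ) _ hint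
    constructor
    · have heq : (fun i : ι => ‖T (e i)‖ ^ 2) = fun i => (A i).toReal := funext hTA
      rw [heq]
      exact ENNReal.summable_toReal (by rw [hsum]; exact hMne)
    · calc ∑' i, ‖T (e i)‖ ^ 2 = ∑' i, (A i).toReal := by simp only [hTA]
        _ = (∑' i, A i).toReal := (ENNReal.tsum_toReal_eq hAne).symm
        _ = M.toReal := by rw [hsum]
        _ = ∫ x, ∫ y, ‖Kf (x, y)‖ ^ 2 ∂μ ∂μ := by rw [← hM2]; exact hsplit
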